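/- For positive semidefinite matrices A, B ∈ M_n(ℂ) and any positive integer k, the Kronecker power satisfies (A+B)^{⊗k} ≥ A^{⊗k} + B^{⊗k} in the Loewner order (i.e., (A+B)^{⊗k} − A^{⊗k} − B^{⊗k} is positive semidefinite). -/

import Mathlib

open ComplexOrder Matrix

/-- The `k`-fold Kronecker (tensor) power of a matrix. -/
def kronPow {n : ℕ} (k : ℕ) (A : Matrix (Fin n) (Fin n) ℂ) :
    Matrix (Fin k → Fin n) (Fin k → Fin n) ℂ :=
  fun x y => ∏ i, A (x i) (y i)

/-- Kronecker product of a family of matrices. -/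
def kronMap {n k : ℕ} (C : Fin k → Matrix (Fin n) (Fin n) ℂ) :
    Matrix (Fin k → Fin n) (Fin k → Fin n) ℂ :=
  fun x y => ∏ i, C i (x i) (y i)

lemma kronMap_mul {n k : ℕ} (C D : Fin k → Matrix (Fin n) (Fin n) ℂ) :
    kronMap C * kronMap D = kronMap (fun i => C i * D i) := by
  ext x y
  simp only [Matrix.mul_apply, kronMap]
  simp_rw [← Finset.prod_mul_distrib]
  exact (Fintype.prod_sum (fun i j => C i (x i) j * D i j (y i))).symm

lemma kronMap_conjTranspose {n k : ℕ} (C : Fin k → Matrix (Fin n) (Fin n) ℂ) :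
    (kronMap C)ᴴ = kronMap (fun i => (C i)ᴴ) := by
  ext x y
  simp [kronMap, Matrix.conjTranspose_apply, map_prod]

lemma kronMap_posSemidef {n k : ℕ} (C : Fin k → Matrix (Fin n) (Fin n) ℂ)
    (hC : ∀ i, (C i).PosSemidef) : (kronMap C).PosSemidef := by
  have hex : ∀ i, ∃ S : Matrix (Fin n) (Fin n) ℂ, C i = star S * S := fun i => by
    open scoped MatrixOrder Matrix.Norms.L2Operator in
    exact CStarAlgebra.nonneg_iff_eq_star_mul_self.mp (hC i).nonneg
  choose S hS using hex
  have key : (kronMap fun i => S i)ᴴ * (kronMap fun i => S i) = kronMap C := by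
    rw [kronMap_conjTranspose, kronMap_mul]
    exact congrArg kronMap (funext fun i => by
      rw [hS i]; rfl)
  rw [← key]
  exact Matrix.posSemidef_conjTranspose_mul_self _

theorem stmt_2 {n : ℕ} (A B : Matrix (Fin n) (Fin n) ℂ)
    (hA : A.PosSemidef) (hB : B.PosSemidef) (k : ℕ) (hk : 0 < k) :
    (kronPow k (A + B) - kronPow k A - kronPow k B).PosSemidef := by
  haveI : NeZero k := ⟨hk.ne'⟩
  set M : Finset (Fin k) → Matrix (Fin k → Fin n) (Fin k → Fin n) ℂ :=
    fun t => kronMap (fun i => if i ∈ t then A else B) with hM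
  have hexp : kronPow k (A + B) = ∑ t : Finset (Fin k), M t := by
    ext x y
    simp only [kronPow, Matrix.add_apply, Finset.sum_apply, hM, kronMap, Matrix.sum_apply]
    rw [Fintype.prod_add (fun i => A (x i) (y i)) (fun i => B (x i) (y i))]
    refine Finset.sum_congr rfl fun t _ => ?_
    simp_rw [show ∀ i, (if i ∈ t then A else B) (x i) (y i)
      = if i ∈ t then A (x i) (y i) else B (x i) (y i) from fun i => by split <;> rfl]
    rw [Finset.prod_ite, Finset.filter_mem_eq_inter, Finset.univ_inter,
      ← Finset.sdiff_eq_filter, ← Finset.compl_eq_univ_sdiff]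
  have huniv : M Finset.univ = kronPow k A := by
    ext x y; simp [hM, kronMap, kronPow]
  have hempty : M ∅ = kronPow k B := by
    ext x y; simp [hM, kronMap, kronPow]
  have hne : (Finset.univ : Finset (Fin k)) ≠ ∅ := Finset.univ_nonempty.ne_empty
  set s : Finset (Finset (Fin k)) :=
    (Finset.univ.erase Finset.univ).erase ∅ with hs
  have hsplit : ∑ t : Finset (Fin k), M t = M Finset.univ + (M ∅ + ∑ t ∈ s, M t) := by
    rw [hs, Finset.add_sum_erase _ M (by simp [Finset.mem_erase, hne.symm]),
      Finset.add_sum_erase _ M (Finset.mem_univ _)]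
  have hdiff : kronPow k (A + B) - kronPow k A - kronPow k B = ∑ t ∈ s, M t := by
    rw [hexp, hsplit, huniv, hempty]; abel
  rw [hdiff]
  refine Finset.sum_induction M _ (fun a b ha hb => ha.add hb) Matrix.PosSemidef.zero
    fun t _ => kronMap_posSemidef _ fun i => ?_
  by_cases h : i ∈ t <;> simp [h, hA, hB]
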